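/- Let τ > 0, let ζ > −1 and let d be a real number with (1/2)d² + ζ(ζ²/3 − 1) < 2/3. Let θ : [0,∞) → ℝ be twice continuously differentiable with θ''(t) + τ·θ'(t) + θ(t)² − 1 = 0 for all t ≥ 0, θ(0) = ζ and θ'(0) = d. Then θ(t) → 1 and θ'(t) → 0 as t → ∞. -/

import Mathlib

open Set Filter

/-- Auxiliary: a function on `[T,∞)` whose derivative is bounded below by `b > 0`
cannot be bounded in absolute value. -/
lemma aux_unbounded {f f' : ℝ → ℝ} {T b M : ℝ} (hb : 0 < b)
    (hd : ∀ t ∈ Ici T, HasDerivWithinAt f (f' t) (Ici T) t)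
    (hlb : ∀ t ∈ Ici T, b ≤ f' t) (hM : ∀ t ∈ Ici T, |f t| ≤ M) : False := by
  have hmono : MonotoneOn (fun s => f s - b * s) (Ici T) := by
    apply monotoneOn_of_hasDerivWithinAt_nonneg (convex_Ici T)
      (f' := fun s => f' s - b)
    · exact (ContinuousOn.sub (fun t ht => (hd t ht).continuousWithinAt)
        (continuous_const.mul continuous_id).continuousOn)
    · intro x hx
      have := ((hd x (interior_subset hx)).sub
        ((hasDerivWithinAt_id x (Ici T)).const_mul b)).mono interior_subset
      simp only [mul_one] at this
      exact this
    · intro x hx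
      have := hlb x (interior_subset hx)
      linarith
  set t := T + (2 * M + 1) / b with ht
  have hMnn : 0 ≤ M := le_trans (abs_nonneg (f T)) (hM T self_mem_Ici)
  have htT : T ≤ t := by
    rw [ht]
    have : 0 ≤ (2 * M + 1) / b := by positivity
    linarith
  have h1 : f T - b * T ≤ f t - b * t := hmono self_mem_Ici (mem_Ici.mpr htT) htT
  have hbt : b * t = b * T + (2 * M + 1) := by
    rw [ht]; field_simp
  have hfT := hM T self_mem_Ici
  have hft := hM t (mem_Ici.mpr htT)
  rw [abs_le] at hfT hft
  nlinarith

set_option maxHeartbeats 4000000 in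
theorem stmt_12 (τ ζ d : ℝ) (hτ : 0 < τ) (hζ : -1 < ζ)
    (hP : (1 / 2) * d ^ 2 + ζ * (ζ ^ 2 / 3 - 1) < 2 / 3) (θ θ' θ'' : ℝ → ℝ)
    (hd1 : ∀ t ∈ Ici (0 : ℝ), HasDerivWithinAt θ (θ' t) (Ici 0) t)
    (hd2 : ∀ t ∈ Ici (0 : ℝ), HasDerivWithinAt θ' (θ'' t) (Ici 0) t)
    (hc : ContinuousOn θ'' (Ici 0))
    (heq : ∀ t : ℝ, 0 ≤ t → θ'' t + τ * θ' t + (θ t) ^ 2 - 1 = 0)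
    (h0 : θ 0 = ζ) (h0' : θ' 0 = d) :
    Tendsto θ atTop (nhds 1) ∧ Tendsto θ' atTop (nhds 0) := by
  have hθc : ContinuousOn θ (Ici 0) := fun t ht => (hd1 t ht).continuousWithinAt
  have hθ'c : ContinuousOn θ' (Ici 0) := fun t ht => (hd2 t ht).continuousWithinAt
  set E : ℝ → ℝ := fun t => θ' t ^ 2 / 2 + (θ t ^ 3 / 3 - θ t) with hEdef
  have hEt : ∀ t, E t = θ' t ^ 2 / 2 + (θ t ^ 3 / 3 - θ t) := fun t => rfl
  have hEc : ContinuousOn E (Ici 0) := by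
    apply ContinuousOn.add
    · exact (hθ'c.pow 2).div_const 2
    · exact ((hθc.pow 3).div_const 3).sub hθc
  -- derivative of the energy
  have hEd : ∀ t ∈ Ici (0:ℝ), HasDerivWithinAt E (-(τ * θ' t ^ 2)) (Ici 0) t := by
    intro t ht
    have h1 := hd2 t ht
    have h2 := hd1 t ht
    have key : HasDerivWithinAt E
        (2 * θ' t ^ 1 * θ'' t / 2 + (3 * θ t ^ 2 * θ' t / 3 - θ' t)) (Ici 0) t :=
      (((h1.pow 2).div_const 2).add (((h2.pow 3).div_const 3).sub h2))
    convert key using 1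
    linear_combination (-(θ' t)) * heq t ht
  clear_value E
  -- energy is nonincreasing
  have hEmono : AntitoneOn E (Ici 0) := by
    apply antitoneOn_of_hasDerivWithinAt_nonpos (convex_Ici 0)
      (f' := fun t => -(τ * θ' t ^ 2)) hEc
    · intro x hx
      exact (hEd x (interior_subset hx)).mono interior_subset
    · intro x hx
      have : 0 ≤ τ * θ' x ^ 2 := mul_nonneg hτ.le (sq_nonneg _)
      linarith
  have hE0 : E 0 < 2 / 3 := by
    rw [hEt 0, h0, h0']
    nlinarith
  have hEle : ∀ t, 0 ≤ t → E t ≤ E 0 := fun t ht => hEmono self_mem_Ici ht ht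
  -- the cubic potential is below the energy
  have hgle : ∀ t, θ t ^ 3 / 3 - θ t ≤ E t := by
    intro t
    rw [hEt t]
    nlinarith [sq_nonneg (θ' t)]
  -- the solution stays in (-1, 2)
  have hglt : ∀ t, 0 ≤ t → θ t ^ 3 / 3 - θ t < 2 / 3 := by
    intro t ht
    linarith [hgle t, hEle t ht]
  have hlt2 : ∀ t, 0 ≤ t → θ t < 2 := by
    intro t ht
    have := hglt t ht
    nlinarith [sq_nonneg (θ t + 1)]
  have hne1 : ∀ t, 0 ≤ t → θ t ≠ -1 := by
    intro t ht h
    have := hglt t ht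
    rw [h] at this
    norm_num at this
  have hgtm1 : ∀ t, 0 ≤ t → -1 < θ t := by
    intro t ht
    by_contra h
    push_neg at h
    have hlt : θ t < -1 := lt_of_le_of_ne h (hne1 t ht)
    have hmem : (-1 : ℝ) ∈ Icc (θ t) (θ 0) := ⟨hlt.le, by rw [h0]; exact hζ.le⟩
    have hsub : Icc (0:ℝ) t ⊆ Ici 0 := Icc_subset_Ici_self
    obtain ⟨s, hs, hθs⟩ := intermediate_value_Icc' ht (hθc.mono hsub) hmem
    exact hne1 s hs.1 hθs
  -- quantitative bounds
  set c : ℝ := 2 / 3 - E 0 with hcdef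
  clear_value c
  have hcpos : 0 < c := by rw [hcdef]; linarith
  have hquant : ∀ t, 0 ≤ t → c ≤ (θ t + 1) ^ 2 := by
    intro t ht
    have h1 : θ t ^ 3 / 3 - θ t ≤ E 0 := le_trans (hgle t) (hEle t ht)
    have h3 := hgtm1 t ht
    have h4 := hlt2 t ht
    rw [hcdef]
    nlinarith [mul_nonneg (sq_nonneg (θ t + 1)) (by linarith : (0:ℝ) ≤ θ t + 1)]
  set ε₀ : ℝ := Real.sqrt c with hε₀def
  clear_value ε₀
  have hε₀pos : 0 < ε₀ := by rw [hε₀def]; exact Real.sqrt_pos.mpr hcpos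
  have hθlb : ∀ t, 0 ≤ t → ε₀ ≤ θ t + 1 := by
    intro t ht
    have h1 := hquant t ht
    have h2 := hgtm1 t ht
    calc ε₀ ≤ Real.sqrt ((θ t + 1) ^ 2) := by rw [hε₀def]; exact Real.sqrt_le_sqrt h1
    _ = |θ t + 1| := Real.sqrt_sq_eq_abs _
    _ = θ t + 1 := abs_of_pos (by linarith)
  -- bound on θ'
  set M : ℝ := max 1 (2 * E 0 + 4 / 3) with hMdef
  clear_value M
  have hθ'sq : ∀ t, 0 ≤ t → θ' t ^ 2 ≤ 2 * E 0 + 4 / 3 := by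
    intro t ht
    have h1 := hEle t ht
    rw [hEt t] at h1
    have h3 := hgtm1 t ht
    nlinarith [mul_nonneg (sq_nonneg (θ t - 1)) (by linarith : (0:ℝ) ≤ θ t + 2)]
  have hMb : ∀ t, 0 ≤ t → |θ' t| ≤ M := by
    intro t ht
    rcases le_total (|θ' t|) 1 with h | h
    · exact h.trans (hMdef ▸ le_max_left _ _)
    · have h2 : |θ' t| ≤ |θ' t| ^ 2 := by nlinarith [abs_nonneg (θ' t)]
      rw [sq_abs] at h2
      exact h2.trans ((hθ'sq t ht).trans (hMdef ▸ le_max_right _ _))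
  have hMpos : 0 < M := lt_of_lt_of_le one_pos (hMdef ▸ le_max_left _ _)
  -- bound on θ''
  set K : ℝ := 5 + τ * M with hKdef
  clear_value K
  have hKpos : 0 < K := by
    have : 0 < τ * M := mul_pos hτ hMpos
    rw [hKdef]; linarith
  have hKb : ∀ t, 0 ≤ t → |θ'' t| ≤ K := by
    intro t ht
    have he : θ'' t = 1 - θ t ^ 2 - τ * θ' t := by linarith [heq t ht]
    have h1 := hgtm1 t ht
    have h2 := hlt2 t ht
    have habs : |τ * θ' t| ≤ τ * M := by
      rw [abs_mul, abs_of_pos hτ]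
      exact mul_le_mul_of_nonneg_left (hMb t ht) hτ.le
    rw [abs_le] at habs
    rw [he, hKdef, abs_le]
    constructor <;> nlinarith [habs.1, habs.2, sq_nonneg (θ t)]
  -- E is bounded below
  have hElb : ∀ t, 0 ≤ t → -(2/3 : ℝ) ≤ E t := by
    intro t ht
    have h1 := hgtm1 t ht
    have h2 := hgle t
    nlinarith [mul_nonneg (sq_nonneg (θ t - 1)) (by linarith : (0:ℝ) ≤ θ t + 2)]
  -- the limit of the energy
  have hne : (E '' Ici 0).Nonempty := ⟨E 0, 0, self_mem_Ici, rfl⟩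
  have hbdd : BddBelow (E '' Ici 0) := by
    refine ⟨-(2/3), ?_⟩
    rintro x ⟨t, ht, rfl⟩
    exact hElb t ht
  set L : ℝ := sInf (E '' Ici 0) with hLdef
  clear_value L
  have hLle : ∀ t, 0 ≤ t → L ≤ E t := fun t ht => hLdef ▸ csInf_le hbdd ⟨t, ht, rfl⟩
  have hLge : -(2/3 : ℝ) ≤ L := hLdef ▸ le_csInf hne (by rintro x ⟨t, ht, rfl⟩; exact hElb t ht)
  have hEL : Tendsto E atTop (nhds L) := by
    rw [Metric.tendsto_atTop]
    intro ε hε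
    obtain ⟨x, ⟨t0, ht0, rfl⟩, hx⟩ := exists_lt_of_csInf_lt hne
      (show sInf (E '' Ici 0) < L + ε by rw [← hLdef]; linarith)
    refine ⟨t0, fun t ht => ?_⟩
    have ht0t : (0:ℝ) ≤ t := le_trans ht0 ht
    have h1 := hLle t ht0t
    have h2 := hEmono ht0 (mem_Ici.mpr ht0t) ht
    rw [Real.dist_eq, abs_lt]
    constructor <;> linarith
  -- Barbalat: θ' → 0
  have hθ'0 : Tendsto θ' atTop (nhds 0) := by
    by_contra hcon
    rw [Metric.tendsto_atTop] at hcon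
    push_neg at hcon
    obtain ⟨ε, hε, hfreq⟩ := hcon
    set h₀ : ℝ := ε / (2 * K) with hh₀def
    clear_value h₀
    have hh₀pos : 0 < h₀ := by rw [hh₀def]; exact div_pos hε (by linarith)
    -- the energy drop claim
    have claim : ∀ t, 0 ≤ t → ε ≤ |θ' t| → E (t + h₀) ≤ E t - τ * (ε/2)^2 * h₀ := by
      intro t ht hbig
      have hlip : ∀ s ∈ Icc t (t + h₀), ε / 2 ≤ |θ' s| := by
        intro s hs
        have hs0 : (0:ℝ) ≤ s := le_trans ht hs.1
        have hdiff : |θ' s - θ' t| ≤ K * |s - t| := by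
          have := Convex.norm_image_sub_le_of_norm_hasDerivWithin_le
            (f := θ') (f' := θ'') (s := Ici (0:ℝ)) (C := K)
            (fun x hx => hd2 x hx) (fun x hx => by simpa using hKb x hx)
            (convex_Ici 0) (mem_Ici.mpr ht) (mem_Ici.mpr hs0)
          simpa [Real.norm_eq_abs] using this
        have h1 : |s - t| ≤ h₀ := by
          rw [abs_of_nonneg (by linarith [hs.1])]
          linarith [hs.2]
        have h2 : K * |s - t| ≤ ε / 2 := by
          have hKh : K * h₀ = ε / 2 := by
            rw [hh₀def]; field_simp
          nlinarith
        have habs : |θ' t| - |θ' s| ≤ |θ' s - θ' t| := by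
          rw [abs_sub_comm]; exact abs_sub_abs_le_abs_sub (θ' t) (θ' s)
        linarith
      set G : ℝ → ℝ := fun s => E s + τ * (ε/2)^2 * s with hGdef
      have hGanti : AntitoneOn G (Icc t (t + h₀)) := by
        apply antitoneOn_of_hasDerivWithinAt_nonpos (convex_Icc _ _)
          (f' := fun s => -(τ * θ' s ^ 2) + τ * (ε/2)^2)
        · exact (hEc.mono (Icc_subset_Ici_self.trans (Ici_subset_Ici.mpr ht))).add
            ((continuous_const.mul continuous_id).continuousOn)
        · intro x hx
          rw [interior_Icc] at hx
          have hx0 : (0:ℝ) ≤ x := le_trans ht hx.1.le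
          have hIoo : Ioo t (t + h₀) ⊆ Ici (0:ℝ) := fun y hy => le_trans ht hy.1.le
          have := ((hEd x (mem_Ici.mpr hx0)).mono hIoo).add
            ((hasDerivWithinAt_id x (Ioo t (t + h₀))).const_mul (τ * (ε/2)^2))
          rw [interior_Icc]
          simp only [mul_one] at this
          exact this
        · intro x hx
          rw [interior_Icc] at hx
          have h3 := hlip x (Ioo_subset_Icc_self hx)
          have h4 : (ε/2)^2 ≤ θ' x ^ 2 := by
            rw [← sq_abs (θ' x)]
            apply pow_le_pow_left₀ (by linarith) h3
          nlinarith
      have hG := hGanti (left_mem_Icc.mpr (by linarith)) (right_mem_Icc.mpr (by linarith))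
        (by linarith)
      simp only [hGdef] at hG
      have hexp : τ*(ε/2)^2*(t+h₀) = τ*(ε/2)^2*t + τ*(ε/2)^2*h₀ := by ring
      linarith
    set δ : ℝ := τ * (ε/2)^2 * h₀ with hδdef
    clear_value δ
    have hδpos : 0 < δ := by
      rw [hδdef]
      exact mul_pos (mul_pos hτ (pow_pos (half_pos hε) 2)) hh₀pos
    rw [Metric.tendsto_atTop] at hEL
    obtain ⟨T, hT⟩ := hEL δ hδpos
    obtain ⟨t, ht, hbig⟩ := hfreq (max T 0)
    have ht0 : (0:ℝ) ≤ t := le_trans (le_max_right T 0) ht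
    have htT : T ≤ t := le_trans (le_max_left T 0) ht
    have h1 := hT t htT
    have h2 := claim t ht0 (by rw [Real.dist_eq, sub_zero] at hbig; exact hbig)
    have h3 := hLle (t + h₀) (by linarith)
    rw [Real.dist_eq, abs_lt] at h1
    linarith [h1.2]
  -- L = -2/3
  have hLeq : L = -(2/3 : ℝ) := by
    by_contra hne23
    have hLgt : -(2/3 : ℝ) < L := lt_of_le_of_ne hLge (Ne.symm hne23)
    set a : ℝ := L + 2/3 with hadef
    clear_value a
    have hapos : 0 < a := by rw [hadef]; linarith
    have hθ'0' := hθ'0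
    rw [Metric.tendsto_atTop] at hθ'0'
    obtain ⟨T₁', hT₁'⟩ := hθ'0' (Real.sqrt (a/2)) (Real.sqrt_pos.mpr (by linarith))
    set T₁ : ℝ := max T₁' 0 with hT₁def
    clear_value T₁
    have hT₁0 : (0:ℝ) ≤ T₁ := hT₁def ▸ le_max_right _ _
    have hsmall : ∀ t, T₁ ≤ t → θ' t ^ 2 / 2 ≤ a / 4 := by
      intro t ht
      have h1 := hT₁' t (le_trans (hT₁def ▸ le_max_left _ _ : T₁' ≤ T₁) ht)
      rw [Real.dist_eq, sub_zero] at h1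
      have h2 : |θ' t| ^ 2 < a / 2 := by
        nlinarith [abs_nonneg (θ' t), Real.sqrt_nonneg (a/2),
          Real.sq_sqrt (by linarith : (0:ℝ) ≤ a/2)]
      rw [sq_abs] at h2
      linarith
    set δ : ℝ := Real.sqrt (9 * a / 16) with hδdef
    clear_value δ
    have hδpos : 0 < δ := by rw [hδdef]; exact Real.sqrt_pos.mpr (by linarith)
    have hfar : ∀ t, T₁ ≤ t → δ ≤ |θ t - 1| := by
      intro t ht
      have ht0 : (0:ℝ) ≤ t := le_trans hT₁0 ht
      have h1 := hLle t ht0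
      rw [hEt t] at h1
      have h2 := hsmall t ht
      have h3 := hgtm1 t ht0
      have h4 := hlt2 t ht0
      have h5 : 9 * a / 16 ≤ (θ t - 1)^2 := by
        rw [hadef] at *
        nlinarith [sq_nonneg (θ t - 1)]
      calc δ ≤ Real.sqrt ((θ t - 1)^2) := by rw [hδdef]; exact Real.sqrt_le_sqrt h5
      _ = |θ t - 1| := Real.sqrt_sq_eq_abs _
    have hne1' : ∀ t, T₁ ≤ t → θ t ≠ 1 := by
      intro t ht h
      have h1 := hfar t ht
      rw [h] at h1
      simp at h1
      linarith
    -- θ stays on one side of 1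
    have honeside : (∀ t, T₁ ≤ t → θ t < 1) ∨ (∀ t, T₁ ≤ t → 1 < θ t) := by
      rcases lt_or_gt_of_ne (hne1' T₁ le_rfl) with h | h
      · left
        intro t ht
        by_contra hcon
        push_neg at hcon
        have hlt : 1 < θ t := lt_of_le_of_ne hcon (Ne.symm (hne1' t ht))
        have hmem : (1:ℝ) ∈ Icc (θ T₁) (θ t) := ⟨h.le, hlt.le⟩
        have hsub : Icc T₁ t ⊆ Ici (0:ℝ) := fun y hy => le_trans hT₁0 hy.1
        obtain ⟨s, hs, hθs⟩ := intermediate_value_Icc ht (hθc.mono hsub) hmem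
        exact hne1' s hs.1 hθs
      · right
        intro t ht
        by_contra hcon
        push_neg at hcon
        have hlt : θ t < 1 := lt_of_le_of_ne hcon (hne1' t ht)
        have hmem : (1:ℝ) ∈ Icc (θ t) (θ T₁) := ⟨hlt.le, h.le⟩
        have hsub : Icc T₁ t ⊆ Ici (0:ℝ) := fun y hy => le_trans hT₁0 hy.1
        obtain ⟨s, hs, hθs⟩ := intermediate_value_Icc' ht (hθc.mono hsub) hmem
        exact hne1' s hs.1 hθs
    have hθ'0'' := hθ'0
    rw [Metric.tendsto_atTop] at hθ'0''
    rcases honeside with hside | hside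
    · -- θ ≤ 1 - δ: θ'' bounded below
      set b : ℝ := δ * ε₀ with hbdef
      clear_value b
      have hbpos : 0 < b := by rw [hbdef]; exact mul_pos hδpos hε₀pos
      obtain ⟨T₂', hT₂'⟩ := hθ'0'' (b / (2 * τ)) (div_pos hbpos (by linarith))
      set T₂ : ℝ := max T₂' T₁ with hT₂def
      clear_value T₂
      have hT₂T₁ : T₁ ≤ T₂ := hT₂def ▸ le_max_right _ _
      have hT₂0 : (0:ℝ) ≤ T₂ := le_trans hT₁0 hT₂T₁
      have hlb : ∀ t ∈ Ici T₂, b / 2 ≤ θ'' t := by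
        intro t ht
        rw [mem_Ici] at ht
        have htT₁ : T₁ ≤ t := le_trans hT₂T₁ ht
        have ht0 : (0:ℝ) ≤ t := le_trans hT₂0 ht
        have hf := hfar t htT₁
        have hs := hside t htT₁
        rw [abs_sub_comm, abs_of_pos (by linarith)] at hf
        have h1 : θ t ≤ 1 - δ := by linarith
        have h2 := hθlb t ht0
        have h3 : b ≤ 1 - θ t ^ 2 := by
          have hmul : δ * ε₀ ≤ (1 - θ t) * (θ t + 1) :=
            mul_le_mul (by linarith) h2 hε₀pos.le (by linarith)
          rw [hbdef]
          nlinarith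
        have h4 := hT₂' t (le_trans (hT₂def ▸ le_max_left _ _ : T₂' ≤ T₂) ht)
        rw [Real.dist_eq, sub_zero, abs_lt] at h4
        have hτθ' : τ * θ' t < b / 2 := by
          have := h4.2
          have h5 : τ * θ' t < τ * (b / (2 * τ)) := by
            apply mul_lt_mul_of_pos_left this hτ
          rw [mul_div_assoc'] at h5
          calc τ * θ' t < τ * b / (2 * τ) := h5
          _ = b / 2 := by field_simp
        have he := heq t ht0
        linarith
      exact aux_unbounded (half_pos hbpos)
        (fun t ht => (hd2 t (mem_Ici.mpr (le_trans hT₂0 ht))).mono (Ici_subset_Ici.mpr hT₂0))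
        hlb (fun t ht => hMb t (le_trans hT₂0 ht))
    · -- θ ≥ 1 + δ: θ'' bounded above
      have hbpos : 0 < δ := hδpos
      obtain ⟨T₂', hT₂'⟩ := hθ'0'' (δ / (2 * τ)) (div_pos hδpos (by linarith))
      set T₂ : ℝ := max T₂' T₁ with hT₂def
      clear_value T₂
      have hT₂T₁ : T₁ ≤ T₂ := hT₂def ▸ le_max_right _ _
      have hT₂0 : (0:ℝ) ≤ T₂ := le_trans hT₁0 hT₂T₁
      have hlb : ∀ t ∈ Ici T₂, δ / 2 ≤ -θ'' t := by
        intro t ht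
        rw [mem_Ici] at ht
        have htT₁ : T₁ ≤ t := le_trans hT₂T₁ ht
        have ht0 : (0:ℝ) ≤ t := le_trans hT₂0 ht
        have hf := hfar t htT₁
        have hs := hside t htT₁
        rw [abs_of_pos (by linarith)] at hf
        have h1 : 1 + δ ≤ θ t := by linarith
        have h3 : δ ≤ θ t ^ 2 - 1 := by nlinarith
        have h4 := hT₂' t (le_trans (hT₂def ▸ le_max_left _ _ : T₂' ≤ T₂) ht)
        rw [Real.dist_eq, sub_zero, abs_lt] at h4
        have hτθ' : -(δ / 2) < τ * θ' t := by
          have h5 : τ * (-(δ / (2 * τ))) < τ * θ' t :=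
            mul_lt_mul_of_pos_left h4.1 hτ
          have h6 : τ * (-(δ / (2 * τ))) = -(δ/2) := by field_simp
          linarith [h6 ▸ h5]
        have he := heq t ht0
        linarith
      exact aux_unbounded (half_pos hδpos)
        (fun t ht => ((hd2 t (mem_Ici.mpr (le_trans hT₂0 ht))).mono (Ici_subset_Ici.mpr hT₂0)).neg)
        hlb (fun t ht => by rw [Pi.neg_apply, abs_neg]; exact hMb t (le_trans hT₂0 ht))
  -- conclude
  rw [hLeq] at hEL
  have hsq : Tendsto (fun t => (θ t - 1)^2) atTop (nhds 0) := by
    have hub : ∀ᶠ t in atTop, (θ t - 1)^2 ≤ 3 * (E t + 2/3) := by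
      filter_upwards [eventually_ge_atTop (0:ℝ)] with t ht
      have h1 := hgtm1 t ht
      have h2 := hgle t
      nlinarith [mul_nonneg (sq_nonneg (θ t - 1)) (by linarith : (0:ℝ) ≤ θ t + 1)]
    have hlb : ∀ᶠ t in atTop, (0:ℝ) ≤ (θ t - 1)^2 :=
      Eventually.of_forall fun t => sq_nonneg _
    have hmain : Tendsto (fun t => 3 * (E t + 2/3)) atTop (nhds 0) := by
      have h := (hEL.add_const (2/3)).const_mul 3
      convert h using 2
      norm_num
    exact tendsto_of_tendsto_of_tendsto_of_le_of_le' tendsto_const_nhds hmain hlb hub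
  have hθ1 : Tendsto θ atTop (nhds 1) := by
    rw [tendsto_iff_dist_tendsto_zero]
    have h := (Real.continuous_sqrt.tendsto 0).comp hsq
    simp only [Function.comp_def, Real.sqrt_sq_eq_abs, Real.sqrt_zero] at h
    simpa [Real.dist_eq] using h
  exact ⟨hθ1, hθ'0⟩
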